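/- arXiv:2105.14267 — 4 statements merged into one kernel-verified Lean document; each statement's English description precedes it below -/
import Mathlib

section
/- Let A be a finite set and let Δ, I : A → ℝ satisfy Δ(a) ≥ 0 and I(a) > 0 for every a ∈ A. Suppose π* belongs to the probability simplex D(A) and minimizes the information ratio π ↦ (Σ_a π(a)Δ(a))² / (Σ_a π(a)I(a)) over D(A). Then for every q ∈ D(A), 2·Σ_a q(a)Δ(a) ≥ (Σ_a π*(a)Δ(a)) · (1 + (Σ_a q(a)I(a))/(Σ_a π*(a)I(a))); in particular 2·Σ_a q(a)Δ(a) ≥ Σ_a π*(a)Δ(a). -/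
open Finset

lemma ids_sum_pos {A : Type*} [Fintype A] (I π : A → ℝ) (hI : ∀ a, 0 < I a)
    (hπ0 : ∀ a, 0 ≤ π a) (hπ1 : ∑ a, π a = 1) : 0 < ∑ a, π a * I a := by
  have h1 : ∃ a ∈ (Finset.univ : Finset A), 0 < π a := by
    by_contra h
    push_neg at h
    have : ∑ a, π a = 0 := Finset.sum_eq_zero fun a _ => le_antisymm (h a (mem_univ a)) (hπ0 a)
    simp [this] at hπ1
  obtain ⟨a, _, ha⟩ := h1
  refine Finset.sum_pos' (fun b _ => mul_nonneg (hπ0 b) (hI b).le) ⟨a, mem_univ a, ?_⟩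
  exact mul_pos ha (hI a)

/-- First-order optimality step for IDS: a minimizer of the squared information ratio
over the probability simplex satisfies the stated comparison inequality against any
other distribution in the simplex. -/
theorem ids_first_order_optimality
    {A : Type*} [Fintype A]
    (Δ I : A → ℝ)
    (hΔ : ∀ a, 0 ≤ Δ a) (hI : ∀ a, 0 < I a)
    (πstar : A → ℝ)
    (hπstar : (∀ a, 0 ≤ πstar a) ∧ ∑ a, πstar a = 1)
    (hmin : ∀ π : A → ℝ, (∀ a, 0 ≤ π a) → ∑ a, π a = 1 →
      (∑ a, πstar a * Δ a) ^ 2 / (∑ a, πstar a * I a) ≤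
        (∑ a, π a * Δ a) ^ 2 / (∑ a, π a * I a)) :
    ∀ q : A → ℝ, (∀ a, 0 ≤ q a) → ∑ a, q a = 1 →
      (2 * ∑ a, q a * Δ a ≥
        (∑ a, πstar a * Δ a) * (1 + (∑ a, q a * I a) / (∑ a, πstar a * I a))) ∧
      2 * ∑ a, q a * Δ a ≥ ∑ a, πstar a * Δ a := by
  obtain ⟨hπ0, hπ1⟩ := hπstar
  intro q hq0 hq1
  set Ds := ∑ a, πstar a * Δ a with hDs
  set Dq := ∑ a, q a * Δ a with hDq
  set Is := ∑ a, πstar a * I a with hIsdef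
  set Iq := ∑ a, q a * I a with hIqdef
  have hIs : 0 < Is := ids_sum_pos I πstar hI hπ0 hπ1
  have hIq : 0 < Iq := ids_sum_pos I q hI hq0 hq1
  have hDs0 : 0 ≤ Ds := Finset.sum_nonneg fun a _ => mul_nonneg (hπ0 a) (hΔ a)
  have hDq0 : 0 ≤ Dq := Finset.sum_nonneg fun a _ => mul_nonneg (hq0 a) (hΔ a)
  have step : ∀ t : ℝ, 0 < t → t ≤ 1 →
      Ds ^ 2 * (Iq - Is) ≤ 2 * Is * Ds * (Dq - Ds) + t * (Is * (Dq - Ds) ^ 2) := by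
    intro t ht0 ht1
    have hmix0 : ∀ a, 0 ≤ (1 - t) * πstar a + t * q a := fun a =>
      add_nonneg (mul_nonneg (by linarith) (hπ0 a)) (mul_nonneg ht0.le (hq0 a))
    have hmix1 : ∑ a, ((1 - t) * πstar a + t * q a) = 1 := by
      rw [Finset.sum_add_distrib, ← Finset.mul_sum, ← Finset.mul_sum, hπ1, hq1]; ring
    have h := hmin _ hmix0 hmix1
    have hDt : ∑ a, ((1 - t) * πstar a + t * q a) * Δ a = (1 - t) * Ds + t * Dq := by
      rw [hDs, hDq, Finset.mul_sum, Finset.mul_sum, ← Finset.sum_add_distrib]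
      exact Finset.sum_congr rfl fun a _ => by ring
    have hIt : ∑ a, ((1 - t) * πstar a + t * q a) * I a = (1 - t) * Is + t * Iq := by
      rw [hIsdef, hIqdef, Finset.mul_sum, Finset.mul_sum, ← Finset.sum_add_distrib]
      exact Finset.sum_congr rfl fun a _ => by ring
    rw [hDt, hIt] at h
    have hIt0 : 0 < (1 - t) * Is + t * Iq := by nlinarith
    rw [div_le_div_iff₀ hIs hIt0] at h
    nlinarith [h, ht0, sq_nonneg (Dq - Ds)]
  have key : Ds ^ 2 * (Iq - Is) ≤ 2 * Is * Ds * (Dq - Ds) := by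
    by_contra hc
    push_neg at hc
    set c := Is * (Dq - Ds) ^ 2 with hcdef
    have hc0 : 0 ≤ c := mul_nonneg hIs.le (sq_nonneg _)
    set ε := Ds ^ 2 * (Iq - Is) - 2 * Is * Ds * (Dq - Ds) with hεdef
    have hε : 0 < ε := by simp only [hεdef]; linarith
    set t := min 1 (ε / (2 * (c + 1))) with htdef
    have ht0 : 0 < t := lt_min one_pos (div_pos hε (by linarith))
    have ht1 : t ≤ 1 := min_le_left _ _
    have htc : t * c < ε := by
      have h1 : t ≤ ε / (2 * (c + 1)) := min_le_right _ _
      have h2 : t * c ≤ (ε / (2 * (c + 1))) * c := by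
        apply mul_le_mul_of_nonneg_right h1 hc0
      have h3 : (ε / (2 * (c + 1))) * c < ε := by
        rw [div_mul_eq_mul_div, div_lt_iff₀ (by linarith : (0:ℝ) < 2 * (c + 1))]
        nlinarith
      linarith
    have := step t ht0 ht1
    linarith
  have key2 : Ds * (Is + Iq) ≤ 2 * Dq * Is := by
    rcases eq_or_lt_of_le hDs0 with h0 | hpos
    · rw [← h0]; nlinarith
    · nlinarith [key]
  have hgoal1 : 2 * Dq ≥ Ds * (1 + Iq / Is) := by
    rw [ge_iff_le]
    have heq : Ds * (1 + Iq / Is) = Ds * (Is + Iq) / Is := by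
      field_simp
    rw [heq, div_le_iff₀ hIs]
    linarith [key2]
  refine ⟨hgoal1, ?_⟩
  have : 0 < Iq / Is := div_pos hIq hIs
  nlinarith [hgoal1]
end

section
/- Let A be a finite set and let Δ, I : A → ℝ satisfy Δ(a) ≥ 0 and I(a) > 0 for every a ∈ A. Suppose π* belongs to the probability simplex D(A) and minimizes π ↦ (Σ_a π(a)Δ(a))² / (Σ_a π(a)I(a)) over D(A). Then for every real λ ≥ 2 and every q ∈ D(A), (Σ_a π*(a)Δ(a))^λ / (Σ_a π*(a)I(a)) ≤ 2^{λ−2} · (Σ_a q(a)Δ(a))^λ / (Σ_a q(a)I(a)). In other words, the minimizer of the squared information ratio is a 2^{λ−2}-approximate minimizer of the generalized information ratio Ψ_λ(π) = (Σ_a π(a)Δ(a))^λ / (Σ_a π(a)I(a)) for every λ ≥ 2. -/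
open Finset

-- positivity of the I-sum for a simplex point
lemma simplex_sumI_pos {A : Type*} [Fintype A] (I : A → ℝ) (hI : ∀ a, 0 < I a)
    (p : A → ℝ) (hp : ∀ a, 0 ≤ p a) (hp1 : ∑ a, p a = 1) :
    0 < ∑ a, p a * I a := by
  have hex : ∃ a, 0 < p a := by
    by_contra h
    push_neg at h
    have : ∑ a, p a ≤ 0 := Finset.sum_nonpos fun a _ => h a
    linarith
  obtain ⟨a, ha⟩ := hex
  exact Finset.sum_pos' (fun b _ => mul_nonneg (hp b) (hI b).le)
    ⟨a, Finset.mem_univ a, mul_pos ha (hI a)⟩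

/-- The minimizer of the squared information ratio over the probability simplex is a
`2^(λ-2)`-approximate minimizer of the generalized information ratio
`Ψ_λ(π) = (⟨π,Δ⟩)^λ / ⟨π,I⟩` for every real `λ ≥ 2`. -/
theorem ids_approx_minimizer_generalized_ratio
    {A : Type*} [Fintype A]
    (Δ I : A → ℝ)
    (hΔ : ∀ a, 0 ≤ Δ a) (hI : ∀ a, 0 < I a)
    (πstar : A → ℝ)
    (hπstar : (∀ a, 0 ≤ πstar a) ∧ ∑ a, πstar a = 1)
    (hmin : ∀ π : A → ℝ, (∀ a, 0 ≤ π a) → ∑ a, π a = 1 →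
      (∑ a, πstar a * Δ a) ^ 2 / (∑ a, πstar a * I a) ≤
        (∑ a, π a * Δ a) ^ 2 / (∑ a, π a * I a)) :
    ∀ l : ℝ, 2 ≤ l → ∀ q : A → ℝ, (∀ a, 0 ≤ q a) → ∑ a, q a = 1 →
      (∑ a, πstar a * Δ a) ^ l / (∑ a, πstar a * I a) ≤
        2 ^ (l - 2) * ((∑ a, q a * Δ a) ^ l / (∑ a, q a * I a)) := by
  intro l hl q hq hq1
  obtain ⟨hπ0, hπ1⟩ := hπstar
  set Ds := ∑ a, πstar a * Δ a with hDs
  set Is := ∑ a, πstar a * I a with hIs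
  set Dq := ∑ a, q a * Δ a with hDq
  set Iq := ∑ a, q a * I a with hIq
  have hDs0 : 0 ≤ Ds := Finset.sum_nonneg fun a _ => mul_nonneg (hπ0 a) (hΔ a)
  have hDq0 : 0 ≤ Dq := Finset.sum_nonneg fun a _ => mul_nonneg (hq a) (hΔ a)
  have hIs0 : 0 < Is := simplex_sumI_pos I hI πstar hπ0 hπ1
  have hIq0 : 0 < Iq := simplex_sumI_pos I hI q hq hq1
  -- key: Ds ≤ 2 * Dq
  have hkey : Ds ≤ 2 * Dq := by
    rcases eq_or_lt_of_le hDs0 with h0 | hDsp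
    · linarith
    have h1 : ∀ t : ℝ, 0 < t → t ≤ 1 →
        Ds ^ 2 * ((1 - t) * Is + t * Iq) ≤ ((1 - t) * Ds + t * Dq) ^ 2 * Is := by
      intro t ht ht1
      have hπt0 : ∀ a, 0 ≤ (1 - t) * πstar a + t * q a := fun a =>
        add_nonneg (mul_nonneg (by linarith) (hπ0 a)) (mul_nonneg ht.le (hq a))
      have hπt1 : ∑ a, ((1 - t) * πstar a + t * q a) = 1 := by
        simp [Finset.sum_add_distrib, ← Finset.mul_sum, hπ1, hq1]
      have hDt : ∑ a, ((1 - t) * πstar a + t * q a) * Δ a = (1 - t) * Ds + t * Dq := by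
        simp [add_mul, Finset.sum_add_distrib, mul_assoc, ← Finset.mul_sum, hDs, hDq]
      have hIt : ∑ a, ((1 - t) * πstar a + t * q a) * I a = (1 - t) * Is + t * Iq := by
        simp [add_mul, Finset.sum_add_distrib, mul_assoc, ← Finset.mul_sum, hIs, hIq]
      have hItpos : 0 < (1 - t) * Is + t * Iq :=
        simplex_sumI_pos I hI _ hπt0 hπt1 |>.trans_eq hIt
      have := hmin _ hπt0 hπt1
      rw [hDt, hIt] at this
      calc Ds ^ 2 * ((1 - t) * Is + t * Iq)
          = Ds ^ 2 / Is * ((1 - t) * Is + t * Iq) * Is := by field_simp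
        _ ≤ ((1 - t) * Ds + t * Dq) ^ 2 / ((1 - t) * Is + t * Iq) * ((1 - t) * Is + t * Iq) * Is := by
            apply mul_le_mul_of_nonneg_right _ hIs0.le
            exact mul_le_mul_of_nonneg_right this hItpos.le
        _ = ((1 - t) * Ds + t * Dq) ^ 2 * Is := by field_simp
    have h2 : Ds ^ 2 * Is ≤ 2 * Ds * Dq * Is := by
      apply le_of_forall_pos_le_add
      intro ε hε
      set C := (Dq - Ds) ^ 2 * Is with hC
      have hC0 : 0 ≤ C := mul_nonneg (sq_nonneg _) hIs0.le
      set t := min 1 (ε / (C + 1)) with htdef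
      have ht : 0 < t := lt_min one_pos (div_pos hε (by linarith))
      have ht1 : t ≤ 1 := min_le_left _ _
      have htC : t * C ≤ ε := by
        have h' : t ≤ ε / (C + 1) := min_le_right _ _
        have : t * C ≤ ε / (C + 1) * C := mul_le_mul_of_nonneg_right h' hC0
        have h'' : ε / (C + 1) * C ≤ ε := by
          rw [div_mul_eq_mul_div, div_le_iff₀ (by linarith)]
          nlinarith
        linarith
      have h1t := h1 t ht ht1
      -- divide by t : Ds^2 * Iq ≤ 2*Ds*Dq*Is - Ds^2*Is + t*C
      have hring : Ds ^ 2 * ((1 - t) * Is + t * Iq) - ((1 - t) * Ds + t * Dq) ^ 2 * Is =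
          t * (Ds ^ 2 * Iq) - t * (2 * Ds * Dq * Is - Ds ^ 2 * Is + t * C) := by
        rw [hC]; ring
      have h3 : t * (Ds ^ 2 * Iq) ≤ t * (2 * Ds * Dq * Is - Ds ^ 2 * Is + t * C) := by
        linarith [h1t, hring]
      have h4 : Ds ^ 2 * Iq ≤ 2 * Ds * Dq * Is - Ds ^ 2 * Is + t * C :=
        le_of_mul_le_mul_left h3 ht
      have h5 : 0 ≤ Ds ^ 2 * Iq := mul_nonneg (sq_nonneg _) hIq0.le
      linarith
    nlinarith [mul_pos hDsp hIs0]
  -- main computation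
  rcases eq_or_lt_of_le hDs0 with h0 | hDsp
  · rw [← h0, Real.zero_rpow (by linarith : l ≠ 0), zero_div]
    positivity
  have hDqp : 0 < Dq := by linarith
  have hl2 : 0 ≤ l - 2 := by linarith
  have e1 : Ds ^ l = Ds ^ 2 * Ds ^ (l - 2) := by
    rw [← Real.rpow_natCast Ds 2, ← Real.rpow_add hDsp]
    norm_num
  have e2 : Dq ^ l = Dq ^ 2 * Dq ^ (l - 2) := by
    rw [← Real.rpow_natCast Dq 2, ← Real.rpow_add hDqp]
    norm_num
  have hmono : Ds ^ (l - 2) ≤ (2 * Dq) ^ (l - 2) :=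
    Real.rpow_le_rpow hDs0 hkey hl2
  have hm2 : (2 * Dq) ^ (l - 2) = 2 ^ (l - 2) * Dq ^ (l - 2) :=
    Real.mul_rpow (by norm_num) hDqp.le
  have hratio := hmin q hq hq1
  rw [← hDq, ← hIq] at hratio
  have hrpos : 0 ≤ Ds ^ (l - 2) := Real.rpow_nonneg hDs0 _
  calc Ds ^ l / Is = Ds ^ 2 / Is * Ds ^ (l - 2) := by rw [e1]; ring
    _ ≤ Dq ^ 2 / Iq * Ds ^ (l - 2) := mul_le_mul_of_nonneg_right hratio hrpos
    _ ≤ Dq ^ 2 / Iq * (2 * Dq) ^ (l - 2) :=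
        mul_le_mul_of_nonneg_left hmono (by positivity)
    _ = 2 ^ (l - 2) * (Dq ^ l / Iq) := by rw [hm2, e2]; ring
end

section
/- Let A be a finite subset of ℝ^d. Let p be a probability distribution on A such that every a ∈ A with p(a) > 0 has at most s nonzero coordinates and satisfies ‖a‖_∞ ≤ 1. Let ν be a probability distribution on A and C > 0 a constant such that Σ_{a∈A} ν(a)·⟨a, w⟩² ≥ C·‖w‖₂² for every w ∈ ℝ^d (i.e., the minimum eigenvalue of Σ_a ν(a)·a·aᵀ is at least C). Let γ ∈ (0, 1] and let π = (1−γ)·p + γ·ν be the mixture distribution on A. Then for any vectors (μ_a)_{a∈A} and v in ℝ^d, Σ_{a*∈A} p(a*)·⟨a*, μ_{a*} − v⟩ ≤ s · √( (1/(γ·C)) · Σ_{a∈A} π(a) · Σ_{a*∈A} p(a*)·⟨a, μ_{a*} − v⟩² ). -/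
open Finset

/-- Core deterministic inequality behind `Ψ_{*,3} ≤ s²/(4 C_min(A))` for the mixture
policy `π = (1−γ) p + γ ν`: if every action with positive posterior probability is
`s`-sparse with `‖a‖_∞ ≤ 1`, and `ν` is exploratory with constant `C`, then
`∑_{a*} p(a*) ⟨a*, μ_{a*} − v⟩ ≤ s √((1/(γC)) ∑ₐ π(a) ∑_{a*} p(a*) ⟨a, μ_{a*} − v⟩²)`. -/
theorem mixture_policy_regret_information_bound
    {d : ℕ} (A : Finset (Fin d → ℝ)) (s : ℕ)
    (p : (Fin d → ℝ) → ℝ)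
    (hp0 : ∀ a ∈ A, 0 ≤ p a) (hp1 : ∑ a ∈ A, p a = 1)
    (hsparse : ∀ a ∈ A, 0 < p a →
      (∃ T : Finset (Fin d), T.card ≤ s ∧ ∀ i ∉ T, a i = 0) ∧ (∀ j, |a j| ≤ 1))
    (ν : (Fin d → ℝ) → ℝ)
    (hν0 : ∀ a ∈ A, 0 ≤ ν a) (hν1 : ∑ a ∈ A, ν a = 1)
    (C : ℝ) (hC : 0 < C)
    (hexp : ∀ w : Fin d → ℝ,
      ∑ a ∈ A, ν a * (∑ i, a i * w i) ^ 2 ≥ C * ∑ i, (w i) ^ 2)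
    (γ : ℝ) (hγ0 : 0 < γ) (hγ1 : γ ≤ 1)
    (μ : (Fin d → ℝ) → (Fin d → ℝ)) (v : Fin d → ℝ) :
    ∑ astar ∈ A, p astar * (∑ i, astar i * (μ astar i - v i)) ≤
      s * Real.sqrt ((1 / (γ * C)) *
        ∑ a ∈ A, ((1 - γ) * p a + γ * ν a) *
          ∑ astar ∈ A, p astar * (∑ i, a i * (μ astar i - v i)) ^ 2) := by
  classical
  set N : (Fin d → ℝ) → ℝ := fun b => ∑ i, (μ b i - v i) ^ 2 with hN
  set Q : ℝ := ∑ a ∈ A, ((1 - γ) * p a + γ * ν a) *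
          ∑ astar ∈ A, p astar * (∑ i, a i * (μ astar i - v i)) ^ 2 with hQ
  have hNnn : ∀ b, 0 ≤ N b := fun b => Finset.sum_nonneg fun i _ => sq_nonneg _
  -- Q lower bound: γ C ∑ p N ≤ Q
  have hlow : γ * C * ∑ astar ∈ A, p astar * N astar ≤ Q := by
    have h1 : γ * ∑ a ∈ A, ν a * ∑ astar ∈ A, p astar * (∑ i, a i * (μ astar i - v i)) ^ 2
        ≤ Q := by
      rw [hQ, Finset.mul_sum]
      refine Finset.sum_le_sum fun a ha => ?_
      have hin : 0 ≤ ∑ astar ∈ A, p astar * (∑ i, a i * (μ astar i - v i)) ^ 2 :=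
        Finset.sum_nonneg fun b hb => mul_nonneg (hp0 b hb) (sq_nonneg _)
      have hle : γ * ν a ≤ (1 - γ) * p a + γ * ν a := by nlinarith [hp0 a ha]
      calc γ * (ν a * ∑ astar ∈ A, p astar * (∑ i, a i * (μ astar i - v i)) ^ 2)
          = (γ * ν a) * ∑ astar ∈ A, p astar * (∑ i, a i * (μ astar i - v i)) ^ 2 := by ring
        _ ≤ ((1 - γ) * p a + γ * ν a)
              * ∑ astar ∈ A, p astar * (∑ i, a i * (μ astar i - v i)) ^ 2 :=
            mul_le_mul_of_nonneg_right hle hin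
    have hswap : ∑ a ∈ A, ν a * ∑ astar ∈ A, p astar * (∑ i, a i * (μ astar i - v i)) ^ 2
        = ∑ astar ∈ A, p astar * ∑ a ∈ A, ν a * (∑ i, a i * (μ astar i - v i)) ^ 2 := by
      simp_rw [Finset.mul_sum]
      rw [Finset.sum_comm]
      exact Finset.sum_congr rfl fun b _ => Finset.sum_congr rfl fun a _ => by ring
    have h2 : C * ∑ astar ∈ A, p astar * N astar ≤
        ∑ astar ∈ A, p astar * ∑ a ∈ A, ν a * (∑ i, a i * (μ astar i - v i)) ^ 2 := by
      rw [Finset.mul_sum]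
      refine Finset.sum_le_sum fun b hb => ?_
      have hb2 := hexp (fun i => μ b i - v i)
      calc C * (p b * N b) = p b * (C * N b) := by ring
        _ ≤ p b * ∑ a ∈ A, ν a * (∑ i, a i * (μ b i - v i)) ^ 2 :=
            mul_le_mul_of_nonneg_left hb2 (hp0 b hb)
    calc γ * C * ∑ astar ∈ A, p astar * N astar
        = γ * (C * ∑ astar ∈ A, p astar * N astar) := by ring
      _ ≤ γ * ∑ astar ∈ A, p astar * ∑ a ∈ A, ν a * (∑ i, a i * (μ astar i - v i)) ^ 2 :=
          mul_le_mul_of_nonneg_left h2 hγ0.le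
      _ = γ * ∑ a ∈ A, ν a * ∑ astar ∈ A, p astar * (∑ i, a i * (μ astar i - v i)) ^ 2 := by
          rw [hswap]
      _ ≤ Q := h1
  have hpN : 0 ≤ ∑ astar ∈ A, p astar * N astar :=
    Finset.sum_nonneg fun b hb => mul_nonneg (hp0 b hb) (hNnn b)
  have hγC : 0 < γ * C := mul_pos hγ0 hC
  have hQnn : 0 ≤ Q := le_trans (by positivity) hlow
  -- case s = 0
  rcases Nat.eq_zero_or_pos s with hs | hs
  · subst hs
    have hL : ∑ astar ∈ A, p astar * (∑ i, astar i * (μ astar i - v i)) = 0 := by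
      refine Finset.sum_eq_zero fun b hb => ?_
      rcases eq_or_lt_of_le (hp0 b hb) with h | h
      · rw [← h, zero_mul]
      · obtain ⟨⟨T, hT, hz⟩, _⟩ := hsparse b hb h
        have hT0 : T = ∅ := Finset.card_eq_zero.mp (Nat.le_zero.mp hT)
        have hz0 : ∀ i, b i = 0 := fun i => hz i (by simp [hT0])
        simp [hz0]
    rw [hL]
    simp [Real.sqrt_nonneg]
  have hs1 : (1 : ℝ) ≤ (s : ℝ) := by exact_mod_cast hs
  -- per-astar bound: ⟨a*, μ a* - v⟩ ≤ √s √(N a*)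
  have hper : ∀ b ∈ A, 0 < p b →
      (∑ i, b i * (μ b i - v i)) ≤ Real.sqrt s * Real.sqrt (N b) := by
    intro b hb hpb
    obtain ⟨⟨T, hT, hz⟩, hbd⟩ := hsparse b hb hpb
    have hsq : (∑ i, b i ^ 2) ≤ (s : ℝ) := by
      have he : ∑ i, b i ^ 2 = ∑ i ∈ T, b i ^ 2 := by
        rw [← Finset.sum_subset (Finset.subset_univ T)]
        intro i _ hi
        rw [hz i hi]; ring
      rw [he]
      calc ∑ i ∈ T, b i ^ 2 ≤ ∑ _i ∈ T, (1 : ℝ) := by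
            refine Finset.sum_le_sum fun i _ => ?_
            have h1 := hbd i
            nlinarith [abs_nonneg (b i), sq_abs (b i)]
        _ = T.card := by simp
        _ ≤ s := by exact_mod_cast hT
    have hcs := Finset.sum_mul_sq_le_sq_mul_sq Finset.univ b (fun i => μ b i - v i)
    have h2 : (∑ i, b i * (μ b i - v i)) ^ 2 ≤ (s : ℝ) * N b :=
      hcs.trans (mul_le_mul_of_nonneg_right hsq (hNnn b))
    have h3 : (∑ i, b i * (μ b i - v i)) ≤ Real.sqrt ((s : ℝ) * N b) := by
      calc (∑ i, b i * (μ b i - v i)) ≤ |∑ i, b i * (μ b i - v i)| := le_abs_self _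
        _ = Real.sqrt ((∑ i, b i * (μ b i - v i)) ^ 2) := (Real.sqrt_sq_eq_abs _).symm
        _ ≤ Real.sqrt ((s : ℝ) * N b) := Real.sqrt_le_sqrt h2
    rwa [Real.sqrt_mul (by positivity)] at h3
  -- step 1: LHS ≤ √s ∑ p √N
  have step1 : ∑ astar ∈ A, p astar * (∑ i, astar i * (μ astar i - v i)) ≤
      ∑ astar ∈ A, p astar * (Real.sqrt s * Real.sqrt (N astar)) := by
    refine Finset.sum_le_sum fun b hb => ?_
    rcases eq_or_lt_of_le (hp0 b hb) with h | h
    · rw [← h, zero_mul, zero_mul]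
    · exact mul_le_mul_of_nonneg_left (hper b hb h) (hp0 b hb)
  -- step 2 : ∑ p √N ≤ √(∑ p N)
  have step2 : ∑ astar ∈ A, p astar * Real.sqrt (N astar) ≤
      Real.sqrt (∑ astar ∈ A, p astar * N astar) := by
    have hcs := Finset.sum_mul_sq_le_sq_mul_sq A (fun b => Real.sqrt (p b))
      (fun b => Real.sqrt (p b) * Real.sqrt (N b))
    have hL : ∑ b ∈ A, Real.sqrt (p b) * (Real.sqrt (p b) * Real.sqrt (N b))
        = ∑ b ∈ A, p b * Real.sqrt (N b) :=
      Finset.sum_congr rfl fun b hb => by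
        rw [← mul_assoc, Real.mul_self_sqrt (hp0 b hb)]
    have hf2 : ∑ b ∈ A, Real.sqrt (p b) ^ 2 = 1 := by
      rw [← hp1]
      exact Finset.sum_congr rfl fun b hb => Real.sq_sqrt (hp0 b hb)
    have hg2 : ∑ b ∈ A, (Real.sqrt (p b) * Real.sqrt (N b)) ^ 2 = ∑ b ∈ A, p b * N b :=
      Finset.sum_congr rfl fun b hb => by
        rw [mul_pow, Real.sq_sqrt (hp0 b hb), Real.sq_sqrt (hNnn b)]
    rw [hL, hf2, hg2, one_mul] at hcs
    have hnn : 0 ≤ ∑ b ∈ A, p b * Real.sqrt (N b) :=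
      Finset.sum_nonneg fun b hb => mul_nonneg (hp0 b hb) (Real.sqrt_nonneg _)
    calc ∑ b ∈ A, p b * Real.sqrt (N b)
        = Real.sqrt ((∑ b ∈ A, p b * Real.sqrt (N b)) ^ 2) := (Real.sqrt_sq hnn).symm
      _ ≤ Real.sqrt (∑ b ∈ A, p b * N b) := Real.sqrt_le_sqrt hcs
  -- step 3 : ∑ p N ≤ (1/(γC)) Q
  have step3 : ∑ astar ∈ A, p astar * N astar ≤ (1 / (γ * C)) * Q := by
    rw [one_div, ← div_eq_inv_mul, le_div_iff₀ hγC]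
    linarith [hlow]
  have hsqrts : Real.sqrt s ≤ (s : ℝ) := by
    calc Real.sqrt s ≤ Real.sqrt ((s : ℝ) ^ 2) := Real.sqrt_le_sqrt (by nlinarith)
      _ = (s : ℝ) := Real.sqrt_sq (by positivity)
  calc ∑ astar ∈ A, p astar * (∑ i, astar i * (μ astar i - v i))
      ≤ ∑ astar ∈ A, p astar * (Real.sqrt s * Real.sqrt (N astar)) := step1
    _ = Real.sqrt s * ∑ astar ∈ A, p astar * Real.sqrt (N astar) := by
        rw [Finset.mul_sum]; exact Finset.sum_congr rfl fun b _ => by ring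
    _ ≤ Real.sqrt s * Real.sqrt (∑ astar ∈ A, p astar * N astar) :=
        mul_le_mul_of_nonneg_left step2 (Real.sqrt_nonneg _)
    _ ≤ (s : ℝ) * Real.sqrt ((1 / (γ * C)) * Q) := by
        refine mul_le_mul hsqrts (Real.sqrt_le_sqrt step3) (Real.sqrt_nonneg _) ?_
        positivity
end

section
/- Let A be a finite subset of ℝ^d, let p be a probability distribution on A, and let (μ_a)_{a∈A} and v be vectors in ℝ^d. Then ( Σ_{a∈A} p(a)·⟨a, μ_a − v⟩ )² ≤ d · Σ_{a∈A} Σ_{a'∈A} p(a)·p(a')·⟨a, μ_{a'} − v⟩². -/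
open Finset

local notation "⟪" x ", " y "⟫" => @inner ℝ _ _ x y

lemma abstract_trace_rank {V : Type*} [NormedAddCommGroup V] [InnerProductSpace ℝ V]
    [FiniteDimensional ℝ V] (d : ℕ) (x y : Fin d → V) :
    (∑ i, ⟪x i, y i⟫) ^ 2 ≤ d * ∑ i, ∑ j, ⟪x i, x j⟫ * ⟪y i, y j⟫ := by
  set Y := Submodule.span ℝ (Set.range y) with hY
  set m := Module.finrank ℝ Y with hm
  have hmd : m ≤ d := by
    simpa [Set.finrank, Fintype.card_fin] using finrank_range_le_card (R := ℝ) y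
  let b : OrthonormalBasis (Fin m) ℝ Y := stdOrthonormalBasis ℝ Y
  have hymem : ∀ i, y i ∈ Y := fun i => Submodule.subset_span (Set.mem_range_self i)
  let c : Fin d → Fin m → ℝ := fun i k => ⟪(b k : V), y i⟫
  have hrepr : ∀ i, y i = ∑ k, c i k • (b k : V) := by
    intro i
    have := b.sum_repr ⟨y i, hymem i⟩
    have h2 : ∀ k, b.repr ⟨y i, hymem i⟩ k = c i k := by
      intro k
      rw [b.repr_apply_apply]
      rfl
    calc y i = ((⟨y i, hymem i⟩ : Y) : V) := rfl
      _ = ((∑ k, b.repr ⟨y i, hymem i⟩ k • b k : Y) : V) := by rw [this]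
      _ = ∑ k, c i k • (b k : V) := by
          push_cast [h2]
          rfl
  have hyy : ∀ i j, ⟪y i, y j⟫ = ∑ k, c i k * c j k := by
    intro i j
    conv_lhs => rw [hrepr i]
    rw [sum_inner]
    refine Finset.sum_congr rfl fun k _ => ?_
    rw [real_inner_smul_left]
  let z : Fin m → V := fun k => ∑ i, c i k • x i
  have htrace : (∑ i, ⟪x i, y i⟫) = ∑ k, ⟪z k, (b k : V)⟫ := by
    simp only [z, sum_inner, real_inner_smul_left]
    rw [Finset.sum_comm]
    refine Finset.sum_congr rfl fun i _ => ?_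
    conv_lhs => rw [hrepr i]
    rw [inner_sum]
    refine Finset.sum_congr rfl fun k _ => ?_
    rw [real_inner_smul_right, real_inner_comm]
  have hnorm : ∀ k, ⟪z k, (b k : V)⟫ ^ 2 ≤ ⟪z k, z k⟫ := by
    intro k
    have hb : ⟪(b k : V), (b k : V)⟫ = 1 := by
      have h1 := b.orthonormal.1 k
      rw [real_inner_self_eq_norm_sq, show ‖(b k : V)‖ = ‖b k‖ from rfl, h1]
      norm_num
    have := real_inner_mul_inner_self_le (z k) (b k : V)
    rw [hb, mul_one] at this
    calc ⟪z k, (b k : V)⟫ ^ 2 = ⟪z k, (b k : V)⟫ * ⟪z k, (b k : V)⟫ := sq _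
      _ ≤ ⟪z k, z k⟫ := this
  have hzz : ∑ k, ⟪z k, z k⟫ = ∑ i, ∑ j, ⟪x i, x j⟫ * ⟪y i, y j⟫ := by
    have h1 : ∀ k, ⟪z k, z k⟫ = ∑ i, ∑ j, c i k * c j k * ⟪x i, x j⟫ := by
      intro k
      simp only [z, sum_inner, real_inner_smul_left, inner_sum, real_inner_smul_right,
        Finset.mul_sum]
      refine Finset.sum_congr rfl fun i _ => Finset.sum_congr rfl fun j _ => ?_
      rw [real_inner_comm (x j) (x i)]
      ring
    simp only [h1, hyy]
    rw [Finset.sum_comm]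
    refine Finset.sum_congr rfl fun i _ => ?_
    rw [Finset.sum_comm]
    refine Finset.sum_congr rfl fun j _ => ?_
    rw [Finset.mul_sum]
    exact Finset.sum_congr rfl fun k _ => by ring
  calc (∑ i, ⟪x i, y i⟫) ^ 2 = (∑ k, ⟪z k, (b k : V)⟫) ^ 2 := by rw [htrace]
    _ ≤ (m : ℝ) * ∑ k, ⟪z k, (b k : V)⟫ ^ 2 := by
        simpa using sq_sum_le_card_mul_sum_sq (s := Finset.univ)
          (f := fun k => ⟪z k, (b k : V)⟫)
    _ ≤ (m : ℝ) * ∑ k, ⟪z k, z k⟫ :=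
        mul_le_mul_of_nonneg_left (Finset.sum_le_sum fun k _ => hnorm k) (by positivity)
    _ ≤ (d : ℝ) * ∑ k, ⟪z k, z k⟫ := by
        refine mul_le_mul_of_nonneg_right (by exact_mod_cast hmd) ?_
        exact Finset.sum_nonneg fun k _ => real_inner_self_nonneg
    _ = d * ∑ i, ∑ j, ⟪x i, x j⟫ * ⟪y i, y j⟫ := by rw [hzz]

lemma swap4 {α β : Type*} [Fintype α] [Fintype β] (F : α → α → β → β → ℝ) :
    ∑ i, ∑ j, ∑ a, ∑ b, F i j a b = ∑ a, ∑ b, ∑ i, ∑ j, F i j a b :=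
  calc ∑ i, ∑ j, ∑ a, ∑ b, F i j a b
      = ∑ i, ∑ a, ∑ j, ∑ b, F i j a b :=
        Finset.sum_congr rfl fun i _ => Finset.sum_comm
    _ = ∑ a, ∑ i, ∑ j, ∑ b, F i j a b := Finset.sum_comm
    _ = ∑ a, ∑ i, ∑ b, ∑ j, F i j a b :=
        Finset.sum_congr rfl fun a _ => Finset.sum_congr rfl fun i _ => Finset.sum_comm
    _ = ∑ a, ∑ b, ∑ i, ∑ j, F i j a b :=
        Finset.sum_congr rfl fun a _ => Finset.sum_comm

/-- Linear-algebraic heart of the bound `Ψ_{*,2} ≤ d/2`: for a probability distribution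
`p` on a finite set of actions `A ⊆ ℝ^d`,
`(∑ₐ p(a) ⟨a, μ_a − v⟩)² ≤ d ∑ₐ ∑_{a'} p(a) p(a') ⟨a, μ_{a'} − v⟩²`. -/
theorem trace_rank_information_ratio_bound
    {d : ℕ} (A : Finset (Fin d → ℝ))
    (p : (Fin d → ℝ) → ℝ)
    (hp0 : ∀ a ∈ A, 0 ≤ p a) (hp1 : ∑ a ∈ A, p a = 1)
    (μ : (Fin d → ℝ) → (Fin d → ℝ)) (v : Fin d → ℝ) :
    (∑ a ∈ A, p a * (∑ i, a i * (μ a i - v i))) ^ 2 ≤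
      d * ∑ a ∈ A, ∑ a' ∈ A, p a * p a' * (∑ i, a i * (μ a' i - v i)) ^ 2 := by
  classical
  let x : Fin d → EuclideanSpace ℝ ↥A := fun i => WithLp.toLp 2 (fun a => Real.sqrt (p a) * (a : Fin d → ℝ) i)
  let y : Fin d → EuclideanSpace ℝ ↥A := fun i => WithLp.toLp 2 (fun a => Real.sqrt (p a) * (μ (a : Fin d → ℝ) i - v i))
  have key := abstract_trace_rank d x y
  have hinner : ∀ f g : EuclideanSpace ℝ ↥A, ⟪f, g⟫ = ∑ a : ↥A, f a * g a := by
    intro f g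
    rw [PiLp.inner_apply]
    exact Finset.sum_congr rfl fun a _ => by simp [RCLike.inner_apply, mul_comm]
  have hps : ∀ a : ↥A, Real.sqrt (p a) * Real.sqrt (p a) = p a := fun a =>
    Real.mul_self_sqrt (hp0 a a.2)
  have hL : (∑ i, ⟪x i, y i⟫) = ∑ a ∈ A, p a * (∑ i, a i * (μ a i - v i)) := by
    calc ∑ i, ⟪x i, y i⟫
        = ∑ i, ∑ a : ↥A, p a * ((a : Fin d → ℝ) i * (μ (a : Fin d → ℝ) i - v i)) := by
          refine Finset.sum_congr rfl fun i _ => ?_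
          rw [hinner]
          refine Finset.sum_congr rfl fun a _ => ?_
          simp only [x, y]
          set s := Real.sqrt (p (a : Fin d → ℝ)) with hs
          have h : s * s = p (a : Fin d → ℝ) := hps a
          rw [← h]; ring
      _ = ∑ a : ↥A, p a * ∑ i, (a : Fin d → ℝ) i * (μ (a : Fin d → ℝ) i - v i) := by
          rw [Finset.sum_comm]
          exact Finset.sum_congr rfl fun a _ => (Finset.mul_sum _ _ _).symm
      _ = ∑ a ∈ A, p a * ∑ i, a i * (μ a i - v i) :=
          Finset.sum_coe_sort A (fun a => p a * ∑ i, a i * (μ a i - v i))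
  have hR : (∑ i, ∑ j, ⟪x i, x j⟫ * ⟪y i, y j⟫)
      = ∑ a ∈ A, ∑ a' ∈ A, p a * p a' * (∑ i, a i * (μ a' i - v i)) ^ 2 := by
    calc ∑ i, ∑ j, ⟪x i, x j⟫ * ⟪y i, y j⟫
        = ∑ i, ∑ j, ∑ a : ↥A, ∑ a' : ↥A,
            p a * p a' * ((a : Fin d → ℝ) i * (μ (a' : Fin d → ℝ) i - v i))
              * ((a : Fin d → ℝ) j * (μ (a' : Fin d → ℝ) j - v j)) := by
          refine Finset.sum_congr rfl fun i _ => Finset.sum_congr rfl fun j _ => ?_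
          rw [hinner, hinner, Finset.sum_mul_sum]
          refine Finset.sum_congr rfl fun a _ => Finset.sum_congr rfl fun a' _ => ?_
          simp only [x, y]
          set s := Real.sqrt (p (a : Fin d → ℝ)) with hs
          set t := Real.sqrt (p (a' : Fin d → ℝ)) with ht
          have h1 : s * s = p (a : Fin d → ℝ) := hps a
          have h2 : t * t = p (a' : Fin d → ℝ) := hps a'
          rw [← h1, ← h2]; ring
      _ = ∑ a : ↥A, ∑ a' : ↥A, ∑ i, ∑ j,
            p a * p a' * ((a : Fin d → ℝ) i * (μ (a' : Fin d → ℝ) i - v i))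
              * ((a : Fin d → ℝ) j * (μ (a' : Fin d → ℝ) j - v j)) := swap4 _
      _ = ∑ a : ↥A, ∑ a' : ↥A,
            p a * p a' * (∑ i, (a : Fin d → ℝ) i * (μ (a' : Fin d → ℝ) i - v i)) ^ 2 := by
          refine Finset.sum_congr rfl fun a _ => Finset.sum_congr rfl fun a' _ => ?_
          rw [sq, Finset.sum_mul_sum, Finset.mul_sum]
          refine Finset.sum_congr rfl fun i _ => ?_
          rw [Finset.mul_sum]
          exact Finset.sum_congr rfl fun j _ => by ring
      _ = ∑ a ∈ A, ∑ a' ∈ A, p a * p a' * (∑ i, a i * (μ a' i - v i)) ^ 2 := by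
          rw [← Finset.sum_coe_sort A
            (fun a => ∑ a' ∈ A, p a * p a' * (∑ i, a i * (μ a' i - v i)) ^ 2)]
          exact Finset.sum_congr rfl fun a _ =>
            Finset.sum_coe_sort A
              (fun a' => p a * p a' * (∑ i, (a : Fin d → ℝ) i * (μ a' i - v i)) ^ 2)
  rw [hL, hR] at key
  exact key
end
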